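/- Let X be a compact zero-dimensional Hausdorff space. Then every Boolean homomorphism φ : CO(X) → 2 is of the form x̂ for a (unique) point x ∈ X, i.e., the intersection ⋂ { U ∈ CO(X) : φ(U) = 1 } is a singleton {x} and φ(U) = 1 ⟺ x ∈ U. -/

import Mathlib

/-- For a compact zero-dimensional Hausdorff space `X`, every Boolean
homomorphism `φ : CO(X) → 2` equals `x̂` for a unique point `x`: the intersection
`⋂ { U clopen : φ U }` is the singleton `{x}` and `φ U ↔ x ∈ U` for all clopen `U`. -/
theorem stmt15 {X : Type*} [TopologicalSpace X] [CompactSpace X] [T2Space X]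
    (hzd : ∀ (x : X) (U : Set X), IsOpen U → x ∈ U →
      ∃ V : Set X, IsClopen V ∧ x ∈ V ∧ V ⊆ U)
    (φ : Set X → Prop)
    (hinter : ∀ U V : Set X, IsClopen U → IsClopen V → (φ (U ∩ V) ↔ (φ U ∧ φ V)))
    (hunion : ∀ U V : Set X, IsClopen U → IsClopen V → (φ (U ∪ V) ↔ (φ U ∨ φ V)))
    (hcompl : ∀ U : Set X, IsClopen U → (φ Uᶜ ↔ ¬ φ U))
    (hbot : ¬ φ ∅) (htop : φ Set.univ) :
    ∃! x : X, (⋂₀ {U : Set X | IsClopen U ∧ φ U} = {x}) ∧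
      ∀ U : Set X, IsClopen U → (φ U ↔ x ∈ U) := by
  set F := {U : Set X | IsClopen U ∧ φ U} with hF
  -- finite intersections of members of F are clopen and satisfy φ
  have hfin : ∀ t : Finset F, IsClopen (⋂ i ∈ t, (i : Set X)) ∧
      φ (⋂ i ∈ t, (i : Set X)) := by
    intro t
    classical
    induction t using Finset.induction_on with
    | empty => simpa using ⟨isClopen_univ, htop⟩
    | insert a s hni ih =>
      rw [Finset.set_biInter_insert]
      exact ⟨a.2.1.inter ih.1, (hinter _ _ a.2.1 ih.1).mpr ⟨a.2.2, ih.2⟩⟩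
  have hne : (⋂₀ F).Nonempty := by
    by_contra h
    rw [Set.not_nonempty_iff_eq_empty] at h
    obtain ⟨t, ht⟩ := CompactSpace.isCompact_univ.elim_finite_subfamily_closed
      (fun U : F => (U : Set X)) (fun U => U.2.1.isClosed)
      (by rw [Set.univ_inter, ← Set.sInter_eq_iInter, h])
    rw [Set.univ_inter] at ht
    exact hbot (ht ▸ (hfin t).2)
  obtain ⟨x, hx⟩ := hne
  have key : ∀ U : Set X, IsClopen U → (φ U ↔ x ∈ U) := by
    intro U hU
    constructor
    · intro hφ
      exact hx U ⟨hU, hφ⟩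
    · intro hxU
      by_contra hφ
      have : x ∈ Uᶜ := hx Uᶜ ⟨hU.compl, (hcompl U hU).mpr hφ⟩
      exact this hxU
  have hsing : ⋂₀ F = {x} := by
    apply Set.eq_singleton_iff_unique_mem.mpr
    refine ⟨hx, ?_⟩
    intro y hy
    by_contra hyx
    obtain ⟨U, V, hU, hV, hxU, hyV, hUV⟩ := t2_separation (Ne.symm hyx)
    obtain ⟨W, hW, hxW, hWU⟩ := hzd x U hU hxU
    have hyW : y ∈ W := hy W ⟨hW, (key W hW).mpr hxW⟩
    exact hUV.le_bot ⟨hWU hyW, hyV⟩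
  refine ⟨x, ⟨hsing, key⟩, ?_⟩
  rintro y ⟨hy, -⟩
  have := hy.symm.trans hsing
  exact Set.singleton_eq_singleton_iff.mp this
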